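/- For every real γ > 0, 1 − (1/(4γ⁴)) · ∫₀^∞ (1 − exp(−x₂)) · x₂ · exp(−x₂²/(4γ²)) · ( ∫₀^{x₂} (1 − exp(−x₁)) · x₁ dx₁ ) dx₂ = (1/γ) · [ γ³ − W(γ)·(2γ⁴ + 5γ² − 1) + W(2γ)·(8γ² − 1) ]. -/

import Mathlib

open MeasureTheory Real

open Filter Set

noncomputable def Ee (y : ℝ) : ℝ := ∫ t in Set.Ioi y, Real.exp (-(t ^ 2))

lemma intE : Integrable (fun t : ℝ => Real.exp (-(t ^ 2))) := by
  have := integrable_exp_neg_mul_sq (b := 1) one_pos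
  simpa using this

lemma Ee_eq (y : ℝ) : Ee y = Ee 0 - ∫ t in (0:ℝ)..y, Real.exp (-(t ^ 2)) := by
  have tot := intervalIntegral.integral_Iic_add_Ioi (μ := volume)
    (f := fun t : ℝ => Real.exp (-(t ^ 2))) (b := y) intE.integrableOn intE.integrableOn
  have tot0 := intervalIntegral.integral_Iic_add_Ioi (μ := volume)
    (f := fun t : ℝ => Real.exp (-(t ^ 2))) (b := 0) intE.integrableOn intE.integrableOn
  have hsub := intervalIntegral.integral_Iic_sub_Iic (μ := volume)
    (f := fun t : ℝ => Real.exp (-(t ^ 2))) (a := 0) (b := y)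
    intE.integrableOn intE.integrableOn
  simp only [Ee]
  linarith [hsub]

lemma hasDerivAt_Ee (y : ℝ) : HasDerivAt Ee (-Real.exp (-(y ^ 2))) y := by
  have h1 : ∀ z, Ee z = Ee 0 - ∫ t in (0:ℝ)..z, Real.exp (-(t ^ 2)) := Ee_eq
  rw [funext h1]
  have h2 : HasDerivAt (fun z => ∫ t in (0:ℝ)..z, Real.exp (-(t ^ 2)))
      (Real.exp (-(y ^ 2))) y := by
    refine intervalIntegral.integral_hasDerivAt_right
      (intE.intervalIntegrable) ?_ ?_
    · exact (Continuous.stronglyMeasurableAtFilter (by fun_prop) _ _)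
    · exact Continuous.continuousAt (by fun_prop)
  exact h2.const_sub (Ee 0)

lemma tendsto_Ee : Tendsto Ee atTop (nhds 0) := by
  have h := MeasureTheory.intervalIntegral_tendsto_integral_Ioi (μ := volume)
    (a := 0) (f := fun t : ℝ => Real.exp (-(t ^ 2))) intE.integrableOn tendsto_id
  have : Tendsto (fun y => Ee 0 - ∫ t in (0:ℝ)..y, Real.exp (-(t ^ 2))) atTop
      (nhds (Ee 0 - Ee 0)) := tendsto_const_nhds.sub h
  simpa [← Ee_eq] using this

lemma inner_int (y : ℝ) :
    ∫ t in (0:ℝ)..y, (1 - Real.exp (-t)) * t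
      = y ^ 2 / 2 - 1 + Real.exp (-y) * (y + 1) := by
  have h : ∀ t ∈ Set.uIcc (0:ℝ) y,
      HasDerivAt (fun s => s ^ 2 / 2 + Real.exp (-s) * (s + 1))
        ((1 - Real.exp (-t)) * t) t := by
    intro t _
    have hexp : HasDerivAt (fun s : ℝ => Real.exp (-s)) (Real.exp (-t) * (-1)) t :=
      ((hasDerivAt_id t).neg).exp
    have hlin : HasDerivAt (fun s : ℝ => s + 1) 1 t := (hasDerivAt_id t).add_const 1
    have := ((hasDerivAt_pow 2 t).div_const 2).add (hexp.mul hlin)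
    refine this.congr_deriv ?_
    push_cast
    ring
  rw [intervalIntegral.integral_eq_sub_of_hasDerivAt h
    (Continuous.intervalIntegrable (by fun_prop) 0 y)]
  simp [Real.exp_zero]
  ring

lemma hXsq {γ : ℝ} (hγ : 0 < γ) :
    Tendsto (fun x : ℝ => x ^ 2 * Real.exp (-(x ^ 2) / (4 * γ ^ 2))) atTop (nhds 0) := by
  have g0 : Tendsto (fun u : ℝ => u * Real.exp (-u)) atTop (nhds 0) := by
    simpa using tendsto_pow_mul_exp_neg_atTop_nhds_zero 1
  have hq : Tendsto (fun x : ℝ => x ^ 2 / (4 * γ ^ 2)) atTop atTop :=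
    Tendsto.atTop_div_const (by positivity) (tendsto_pow_atTop (by norm_num))
  have h := (g0.comp hq).const_mul (4 * γ ^ 2)
  rw [mul_zero] at h
  refine h.congr fun x => ?_
  simp only [Function.comp]
  rw [neg_div]
  field_simp

lemma term_tendsto {γ : ℝ} (hγ : 0 < γ) (p q r : ℝ) (w : ℝ → ℝ)
    (hw0 : ∀ x, 0 ≤ w x) (hw1 : ∀ x, 0 ≤ x → w x ≤ 1) :
    Tendsto (fun x : ℝ => (p * x ^ 2 + (q * x + r)) *
      (Real.exp (-(x ^ 2) / (4 * γ ^ 2)) * w x)) atTop (nhds 0) := by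
  apply squeeze_zero_norm'
    (a := fun x => (|p| + |q| + |r|) * (x ^ 2 * Real.exp (-(x ^ 2) / (4 * γ ^ 2))))
  · filter_upwards [eventually_ge_atTop 1] with x hx
    have hx0 : (0:ℝ) ≤ x := by linarith
    have hu : (0:ℝ) < Real.exp (-(x ^ 2) / (4 * γ ^ 2)) := Real.exp_pos _
    rw [Real.norm_eq_abs, abs_mul]
    have hpoly : |p * x ^ 2 + (q * x + r)| ≤ (|p| + |q| + |r|) * x ^ 2 := by
      have h1 : |p * x ^ 2 + (q * x + r)| ≤ |p| * x ^ 2 + (|q| * x + |r|) := by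
        calc |p * x ^ 2 + (q * x + r)| ≤ |p * x ^ 2| + |q * x + r| := abs_add_le _ _
          _ ≤ |p * x ^ 2| + (|q * x| + |r|) := by linarith [abs_add_le (q * x) r]
          _ = |p| * x ^ 2 + (|q| * x + |r|) := by
              rw [abs_mul, abs_mul, abs_of_nonneg hx0, abs_of_nonneg (by positivity : (0:ℝ) ≤ x ^ 2)]
      have hx2 : x ≤ x ^ 2 := by nlinarith
      have hx1 : (1:ℝ) ≤ x ^ 2 := by nlinarith
      nlinarith [mul_le_mul_of_nonneg_left hx2 (abs_nonneg q),
        mul_le_mul_of_nonneg_left hx1 (abs_nonneg r)]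
    have hw : |Real.exp (-(x ^ 2) / (4 * γ ^ 2)) * w x| ≤ Real.exp (-(x ^ 2) / (4 * γ ^ 2)) := by
      rw [abs_mul, abs_of_pos hu, abs_of_nonneg (hw0 x)]
      nlinarith [hw1 x hx0]
    calc |p * x ^ 2 + (q * x + r)| * |Real.exp (-(x ^ 2) / (4 * γ ^ 2)) * w x|
        ≤ ((|p| + |q| + |r|) * x ^ 2) * Real.exp (-(x ^ 2) / (4 * γ ^ 2)) :=
          mul_le_mul hpoly hw (abs_nonneg _) (by positivity)
      _ = (|p| + |q| + |r|) * (x ^ 2 * Real.exp (-(x ^ 2) / (4 * γ ^ 2))) := by ring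
  · have := (hXsq hγ).const_mul (|p| + |q| + |r|)
    simpa using this


/-- `W x = exp (x²) · ∫_x^∞ exp (−t²) dt`, i.e. `(√π/2)·erfcx x`. -/
noncomputable def W (x : ℝ) : ℝ := Real.exp (x ^ 2) * ∫ t in Set.Ioi x, Real.exp (-(t ^ 2))

theorem reliability_independent_second_order (γ : ℝ) (hγ : 0 < γ) :
    1 - (1 / (4 * γ ^ 4)) *
      ∫ x₂ in Set.Ioi (0 : ℝ),
        (1 - Real.exp (-x₂)) * x₂ * Real.exp (-(x₂ ^ 2) / (4 * γ ^ 2)) *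
          ∫ x₁ in (0 : ℝ)..x₂, (1 - Real.exp (-x₁)) * x₁
      = (1 / γ) * (γ ^ 3 - W γ * (2 * γ ^ 4 + 5 * γ ^ 2 - 1)
          + W (2 * γ) * (8 * γ ^ 2 - 1)) := by
  have hγ0 : γ ≠ 0 := hγ.ne'
  simp only [inner_int]
  set F : ℝ → ℝ := fun x =>
    (-γ ^ 2 * x ^ 2 + (0 * x + (2 * γ ^ 2 - 4 * γ ^ 4))) * Real.exp (-(x ^ 2) / (4 * γ ^ 2))
    + (γ ^ 2 * x ^ 2 + (-(2 * γ ^ 4 + 2 * γ ^ 2) * x + (4 * γ ^ 6 + 8 * γ ^ 4 - 4 * γ ^ 2))) *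
        (Real.exp (-(x ^ 2) / (4 * γ ^ 2)) * Real.exp (-x))
    + (0 * x ^ 2 + (2 * γ ^ 2 * x + (2 * γ ^ 2 - 8 * γ ^ 4))) *
        (Real.exp (-(x ^ 2) / (4 * γ ^ 2)) * (Real.exp (-x) * Real.exp (-x)))
    + ((-8 * γ ^ 7 - 20 * γ ^ 5 + 4 * γ ^ 3) * Real.exp (γ ^ 2)) * Ee (x / (2 * γ) + γ)
    + ((32 * γ ^ 5 - 4 * γ ^ 3) * Real.exp (4 * γ ^ 2)) * Ee (x / (2 * γ) + 2 * γ) with hF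
  have hderiv : ∀ x ∈ Set.Ici (0:ℝ), HasDerivAt F
      ((1 - Real.exp (-x)) * x * Real.exp (-(x ^ 2) / (4 * γ ^ 2)) *
        (x ^ 2 / 2 - 1 + Real.exp (-x) * (x + 1))) x := by
    intro x _
    have hu : HasDerivAt (fun x : ℝ => Real.exp (-(x ^ 2) / (4 * γ ^ 2)))
        (Real.exp (-(x ^ 2) / (4 * γ ^ 2)) * (-(2 * x ^ 1 : ℝ) / (4 * γ ^ 2))) x := by
      have h := (((hasDerivAt_pow 2 x).neg).div_const (4 * γ ^ 2)).exp
      refine h.congr_deriv ?_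
      norm_num
    have hv : HasDerivAt (fun x : ℝ => Real.exp (-x)) (Real.exp (-x) * (-1)) x :=
      (hasDerivAt_id' (x := x)).neg.exp
    have hpoly : ∀ p q r : ℝ, HasDerivAt (fun x : ℝ => p * x ^ 2 + (q * x + r))
        (p * (2 * x) + q) x := by
      intro p q r
      have h1 := (hasDerivAt_pow 2 x).const_mul p
      have h2 := ((hasDerivAt_id' (x := x)).const_mul q).add_const r
      have := h1.add h2
      refine this.congr_deriv ?_
      push_cast
      ring
    have hu1 : HasDerivAt (fun x : ℝ => x / (2 * γ) + γ) (1 / (2 * γ)) x := by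
      simpa using ((hasDerivAt_id' (x := x)).div_const (2 * γ)).add_const γ
    have hu2 : HasDerivAt (fun x : ℝ => x / (2 * γ) + 2 * γ) (1 / (2 * γ)) x := by
      simpa using ((hasDerivAt_id' (x := x)).div_const (2 * γ)).add_const (2 * γ)
    have h1 := (hpoly (-γ ^ 2) 0 (2 * γ ^ 2 - 4 * γ ^ 4)).mul hu
    have h2 := (hpoly (γ ^ 2) (-(2 * γ ^ 4 + 2 * γ ^ 2)) (4 * γ ^ 6 + 8 * γ ^ 4 - 4 * γ ^ 2)).mul
      (hu.mul hv)
    have h3 := (hpoly 0 (2 * γ ^ 2) (2 * γ ^ 2 - 8 * γ ^ 4)).mul (hu.mul (hv.mul hv))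
    have h4 := ((hasDerivAt_Ee (x / (2 * γ) + γ)).comp x hu1).const_mul
      ((-8 * γ ^ 7 - 20 * γ ^ 5 + 4 * γ ^ 3) * Real.exp (γ ^ 2))
    have h5 := ((hasDerivAt_Ee (x / (2 * γ) + 2 * γ)).comp x hu2).const_mul
      ((32 * γ ^ 5 - 4 * γ ^ 3) * Real.exp (4 * γ ^ 2))
    have hbig := (((h1.add h2).add h3).add h4).add h5
    rw [hF]
    refine hbig.congr_deriv ?_
    simp only [Pi.mul_apply]
    have hE1 : Real.exp (-((x / (2 * γ) + γ) ^ 2))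
        = Real.exp (-(x ^ 2) / (4 * γ ^ 2)) * Real.exp (-x) * (Real.exp (γ ^ 2))⁻¹ := by
      rw [← Real.exp_neg, ← Real.exp_add, ← Real.exp_add]
      congr 1
      field_simp
      ring
    have hE2 : Real.exp (-((x / (2 * γ) + 2 * γ) ^ 2))
        = Real.exp (-(x ^ 2) / (4 * γ ^ 2)) * (Real.exp (-x) * Real.exp (-x)) *
          (Real.exp (4 * γ ^ 2))⁻¹ := by
      rw [← Real.exp_neg, ← Real.exp_add, ← Real.exp_add, ← Real.exp_add]
      congr 1
      field_simp
      ring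
    rw [hE1, hE2]
    have e1 := Real.exp_ne_zero (γ ^ 2)
    have e2 := Real.exp_ne_zero (4 * γ ^ 2)
    field_simp
    ring
  have hpos : ∀ x ∈ Set.Ioi (0:ℝ), 0 ≤
      (1 - Real.exp (-x)) * x * Real.exp (-(x ^ 2) / (4 * γ ^ 2)) *
        (x ^ 2 / 2 - 1 + Real.exp (-x) * (x + 1)) := by
    intro x hx
    have hx0 : (0:ℝ) < x := hx
    have h1 : Real.exp (-x) ≤ 1 := by
      rw [Real.exp_le_one_iff]
      linarith
    have h2 : 0 ≤ x ^ 2 / 2 - 1 + Real.exp (-x) * (x + 1) := by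
      rw [← inner_int x]
      apply intervalIntegral.integral_nonneg hx0.le
      intro t ht
      have ht1 : (0:ℝ) ≤ t := ht.1
      have ht2 : Real.exp (-t) ≤ 1 := by
        rw [Real.exp_le_one_iff]
        linarith
      exact mul_nonneg (by linarith) ht1
    exact mul_nonneg (mul_nonneg (mul_nonneg (by linarith) hx0.le) (Real.exp_pos _).le) h2
  have htop : Tendsto F atTop (nhds 0) := by
    rw [hF]
    have harg1 : Tendsto (fun x : ℝ => x / (2 * γ) + γ) atTop atTop :=
      tendsto_atTop_add_const_right _ γ (tendsto_id.atTop_div_const (by positivity))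
    have harg2 : Tendsto (fun x : ℝ => x / (2 * γ) + 2 * γ) atTop atTop :=
      tendsto_atTop_add_const_right _ (2 * γ) (tendsto_id.atTop_div_const (by positivity))
    have ht1 : Tendsto (fun x : ℝ =>
        (-γ ^ 2 * x ^ 2 + (0 * x + (2 * γ ^ 2 - 4 * γ ^ 4))) *
          Real.exp (-(x ^ 2) / (4 * γ ^ 2))) atTop (nhds 0) := by
      have := term_tendsto hγ (-γ ^ 2) 0 (2 * γ ^ 2 - 4 * γ ^ 4) (fun _ => 1)
        (fun _ => zero_le_one) (fun _ _ => le_refl 1)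
      simpa only [mul_one] using this
    have ht2 := term_tendsto hγ (γ ^ 2) (-(2 * γ ^ 4 + 2 * γ ^ 2))
      (4 * γ ^ 6 + 8 * γ ^ 4 - 4 * γ ^ 2) (fun x => Real.exp (-x))
      (fun x => (Real.exp_pos _).le)
      (fun x hx => by show Real.exp (-x) ≤ 1; rw [Real.exp_le_one_iff]; linarith)
    have ht3 := term_tendsto hγ 0 (2 * γ ^ 2) (2 * γ ^ 2 - 8 * γ ^ 4)
      (fun x => Real.exp (-x) * Real.exp (-x))
      (fun x => (mul_nonneg (Real.exp_pos _).le (Real.exp_pos _).le))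
      (fun x hx => by
        have h1 : Real.exp (-x) ≤ 1 := by rw [Real.exp_le_one_iff]; linarith
        show Real.exp (-x) * Real.exp (-x) ≤ 1
        nlinarith [(Real.exp_pos (-x)).le])
    have ht4 : Tendsto (fun x : ℝ =>
        ((-8 * γ ^ 7 - 20 * γ ^ 5 + 4 * γ ^ 3) * Real.exp (γ ^ 2)) * Ee (x / (2 * γ) + γ))
        atTop (nhds 0) := by
      have := (tendsto_Ee.comp harg1).const_mul
        ((-8 * γ ^ 7 - 20 * γ ^ 5 + 4 * γ ^ 3) * Real.exp (γ ^ 2))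
      simpa using this
    have ht5 : Tendsto (fun x : ℝ =>
        ((32 * γ ^ 5 - 4 * γ ^ 3) * Real.exp (4 * γ ^ 2)) * Ee (x / (2 * γ) + 2 * γ))
        atTop (nhds 0) := by
      have := (tendsto_Ee.comp harg2).const_mul
        ((32 * γ ^ 5 - 4 * γ ^ 3) * Real.exp (4 * γ ^ 2))
      simpa using this
    have := (((ht1.add ht2).add ht3).add ht4).add ht5
    simpa using this
  have key := integral_Ioi_of_hasDerivAt_of_nonneg' hderiv hpos htop
  rw [key, hF]
  have harg1 : (0:ℝ) / (2 * γ) + γ = γ := by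
    field_simp
    ring
  have harg2 : (0:ℝ) / (2 * γ) + 2 * γ = 2 * γ := by
    field_simp
    ring
  simp only [harg1, harg2]
  have hW1 : W γ = Real.exp (γ ^ 2) * Ee γ := rfl
  have hW2 : W (2 * γ) = Real.exp (4 * γ ^ 2) * Ee (2 * γ) := by
    rw [W, show ((2:ℝ) * γ) ^ 2 = 4 * γ ^ 2 by ring]
    rfl
  rw [hW1, hW2]
  have e1 := Real.exp_ne_zero (γ ^ 2)
  have e2 := Real.exp_ne_zero (4 * γ ^ 2)
  norm_num
  field_simp
  ring
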